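/- Let n ≥ 1, let R₊ ⊂ ℝⁿ \ {0} be a finite set of nonzero vectors and κ : R₊ → [0,∞). Define the weight w(x) = ∏_{α ∈ R₊} |⟨α,x⟩|^{2κ(α)}, set χ = Σ_{α ∈ R₊} κ(α), assume 0 < 𝔠 := ∫_{ℝⁿ} e^{−|x|²/2} w(x) dx < ∞, and let ν be the finite measure ν(dx) = 𝔠^{−1} e^{−|x|²/2} w(x) dx. For s ∈ (0,1/2), disjoint measurable A, B ⊂ ℝⁿ, set L̃_s(A,B) = ∫_A ∫_B |x−y|^{−(2χ+n+2s)} ν(dy) ν(dx), and for an open set Ω ⊂ ℝⁿ and a measurable set E ⊂ ℝⁿ set Pẽr_s(E,Ω) = L̃_s(E∩Ω, E^c∩Ω) + L̃_s(E∩Ω, E^c∩Ω^c) + L̃_s(E∩Ω^c, E^c∩Ω). If Pẽr_{s₀}(E,Ω) < ∞ for some s₀ ∈ (0,1/2), then lim_{s→0⁺} s · Pẽr_s(E,Ω) = 0. -/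

import Mathlib

open MeasureTheory Real Filter Topology Set
open scoped ENNReal RealInnerProductSpace

/-- The Dunkl weight `w(x) = ∏_{α ∈ R₊} |⟨α,x⟩|^{2κ(α)}`. -/
noncomputable def dunklWeight (n : ℕ) (R : Finset (EuclideanSpace ℝ (Fin n)))
    (κ : EuclideanSpace ℝ (Fin n) → ℝ) (x : EuclideanSpace ℝ (Fin n)) : ℝ :=
  ∏ α ∈ R, |⟪α, x⟫| ^ (2 * κ α)

/-- The Gaussian-type measure `ν(dx) = 𝔠⁻¹ e^{-|x|²/2} w(x) dx`. -/
noncomputable def nuMeasure (n : ℕ) (R : Finset (EuclideanSpace ℝ (Fin n)))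
    (κ : EuclideanSpace ℝ (Fin n) → ℝ) (c : ℝ) :
    Measure (EuclideanSpace ℝ (Fin n)) :=
  volume.withDensity
    (fun x => ENNReal.ofReal (c⁻¹ * Real.exp (-‖x‖ ^ 2 / 2) * dunklWeight n R κ x))

/-- The weighted interaction functional
`L̃_s(A,B) = ∫_A ∫_B |x−y|^{-(2χ+n+2s)} ν(dy) ν(dx)` with `χ = Σ_{α ∈ R₊} κ(α)`. -/
noncomputable def wL (n : ℕ) (R : Finset (EuclideanSpace ℝ (Fin n)))
    (κ : EuclideanSpace ℝ (Fin n) → ℝ) (c s : ℝ)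
    (A B : Set (EuclideanSpace ℝ (Fin n))) : ℝ≥0∞ :=
  ∫⁻ x in A, (∫⁻ y in B,
    ENNReal.ofReal (‖x - y‖ ^ (-(2 * (∑ α ∈ R, κ α) + (n : ℝ) + 2 * s)))
      ∂(nuMeasure n R κ c)) ∂(nuMeasure n R κ c)

/-- The weighted `s`-perimeter
`Pẽr_s(E,Ω) = L̃_s(E∩Ω, Eᶜ∩Ω) + L̃_s(E∩Ω, Eᶜ∩Ωᶜ) + L̃_s(E∩Ωᶜ, Eᶜ∩Ω)`. -/
noncomputable def wPer (n : ℕ) (R : Finset (EuclideanSpace ℝ (Fin n)))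
    (κ : EuclideanSpace ℝ (Fin n) → ℝ) (c s : ℝ)
    (E Ω : Set (EuclideanSpace ℝ (Fin n))) : ℝ≥0∞ :=
  wL n R κ c s (E ∩ Ω) (Eᶜ ∩ Ω) + wL n R κ c s (E ∩ Ω) (Eᶜ ∩ Ωᶜ) +
    wL n R κ c s (E ∩ Ωᶜ) (Eᶜ ∩ Ω)

lemma ker_le (M s s₀ : ℝ) (hM : 0 ≤ M) (hs : 0 < s) (hss : s ≤ s₀) (r : ℝ) (hr : 0 ≤ r) :
    ENNReal.ofReal (r ^ (-(M + 2 * s))) ≤ ENNReal.ofReal (r ^ (-(M + 2 * s₀))) + 1 := by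
  rcases eq_or_lt_of_le hr with h0 | h0
  · rw [← h0, Real.zero_rpow (by nlinarith)]; simp
  rcases le_total r 1 with h1 | h1
  · refine le_trans ?_ le_self_add
    exact ENNReal.ofReal_le_ofReal
      (Real.rpow_le_rpow_of_exponent_ge h0 h1 (by linarith))
  · refine le_trans ?_ le_add_self
    rw [ENNReal.ofReal_le_one]
    exact Real.rpow_le_one_of_one_le_of_nonpos h1 (by nlinarith)

lemma nu_univ (n : ℕ) (R : Finset (EuclideanSpace ℝ (Fin n)))
    (κ : EuclideanSpace ℝ (Fin n) → ℝ) (c : ℝ) (hc : 0 < c)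
    (hceq : (∫⁻ x, ENNReal.ofReal (Real.exp (-‖x‖ ^ 2 / 2) * dunklWeight n R κ x))
      = ENNReal.ofReal c) :
    nuMeasure n R κ c Set.univ = 1 := by
  rw [nuMeasure, withDensity_apply _ MeasurableSet.univ, Measure.restrict_univ]
  have h1 : ∀ x : EuclideanSpace ℝ (Fin n),
      ENNReal.ofReal (c⁻¹ * Real.exp (-‖x‖ ^ 2 / 2) * dunklWeight n R κ x)
        = ENNReal.ofReal c⁻¹ *
          ENNReal.ofReal (Real.exp (-‖x‖ ^ 2 / 2) * dunklWeight n R κ x) := by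
    intro x
    rw [mul_assoc, ENNReal.ofReal_mul (by positivity)]
  simp_rw [h1]
  rw [lintegral_const_mul' _ _ ENNReal.ofReal_ne_top, hceq,
    ← ENNReal.ofReal_mul (by positivity), inv_mul_cancel₀ hc.ne', ENNReal.ofReal_one]

lemma wL_le (n : ℕ) (R : Finset (EuclideanSpace ℝ (Fin n)))
    (κ : EuclideanSpace ℝ (Fin n) → ℝ) (hκ : ∀ α ∈ R, 0 ≤ κ α) (c : ℝ) (hc : 0 < c)
    (hceq : (∫⁻ x, ENNReal.ofReal (Real.exp (-‖x‖ ^ 2 / 2) * dunklWeight n R κ x))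
      = ENNReal.ofReal c)
    (s s₀ : ℝ) (hs : 0 < s) (hss : s ≤ s₀)
    (A B : Set (EuclideanSpace ℝ (Fin n))) :
    wL n R κ c s A B ≤ wL n R κ c s₀ A B + 1 := by
  set ν := nuMeasure n R κ c with hν
  have hM : (0:ℝ) ≤ 2 * (∑ α ∈ R, κ α) + (n : ℝ) := by
    have : (0:ℝ) ≤ ∑ α ∈ R, κ α := Finset.sum_nonneg hκ
    positivity
  have hBle : ν B ≤ 1 := by
    rw [show (1:ℝ≥0∞) = ν Set.univ from (nu_univ n R κ c hc hceq).symm]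
    exact measure_mono (Set.subset_univ B)
  have hAle : ν A ≤ 1 := by
    rw [show (1:ℝ≥0∞) = ν Set.univ from (nu_univ n R κ c hc hceq).symm]
    exact measure_mono (Set.subset_univ A)
  calc wL n R κ c s A B
      ≤ ∫⁻ x in A, ((∫⁻ y in B,
          ENNReal.ofReal (‖x - y‖ ^ (-(2 * (∑ α ∈ R, κ α) + (n : ℝ) + 2 * s₀))) ∂ν)
            + ν B) ∂ν := by
        refine lintegral_mono fun x => ?_
        calc (∫⁻ y in B,
            ENNReal.ofReal (‖x - y‖ ^ (-(2 * (∑ α ∈ R, κ α) + (n : ℝ) + 2 * s))) ∂ν)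
            ≤ ∫⁻ y in B,
              (ENNReal.ofReal (‖x - y‖ ^ (-(2 * (∑ α ∈ R, κ α) + (n : ℝ) + 2 * s₀)))
                + 1) ∂ν := by
              refine lintegral_mono fun y => ?_
              exact ker_le _ s s₀ hM hs hss _ (norm_nonneg _)
          _ = (∫⁻ y in B,
              ENNReal.ofReal (‖x - y‖ ^ (-(2 * (∑ α ∈ R, κ α) + (n : ℝ) + 2 * s₀))) ∂ν)
                + ν B := by
              rw [lintegral_add_right _ measurable_const, setLIntegral_const, one_mul]
    _ = wL n R κ c s₀ A B + ν B * ν A := by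
        rw [lintegral_add_right _ measurable_const, setLIntegral_const]; rfl
    _ ≤ wL n R κ c s₀ A B + 1 := by
        gcongr
        calc ν B * ν A ≤ 1 * 1 := by gcongr
          _ = 1 := one_mul 1

/-- if the weighted perimeter `Pẽr_{s₀}(E,Ω)` is finite for some
`s₀ ∈ (0,1/2)`, then `lim_{s→0⁺} s Pẽr_s(E,Ω) = 0`. -/
theorem statement17 (n : ℕ) (hn : 1 ≤ n)
    (R : Finset (EuclideanSpace ℝ (Fin n))) (hR : ∀ α ∈ R, α ≠ 0)
    (κ : EuclideanSpace ℝ (Fin n) → ℝ) (hκ : ∀ α ∈ R, 0 ≤ κ α)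
    (c : ℝ) (hc : 0 < c)
    (hceq : (∫⁻ x, ENNReal.ofReal (Real.exp (-‖x‖ ^ 2 / 2) * dunklWeight n R κ x))
      = ENNReal.ofReal c)
    (Ω : Set (EuclideanSpace ℝ (Fin n))) (hΩ : IsOpen Ω)
    (E : Set (EuclideanSpace ℝ (Fin n))) (hE : MeasurableSet E)
    (s₀ : ℝ) (hs₀ : s₀ ∈ Set.Ioo (0:ℝ) (1/2))
    (hfin : wPer n R κ c s₀ E Ω < ⊤) :
    Tendsto (fun s : ℝ => ENNReal.ofReal s * wPer n R κ c s E Ω)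
      (𝓝[>] (0:ℝ)) (𝓝 0) := by
  have hs0 := hs₀.1
  set K : ℝ≥0∞ := wPer n R κ c s₀ E Ω + 3 with hK
  have hKne : K ≠ ⊤ := by
    rw [hK]
    exact ENNReal.add_ne_top.mpr ⟨hfin.ne, by norm_num⟩
  have hbound : ∀ s : ℝ, 0 < s → s ≤ s₀ →
      wPer n R κ c s E Ω ≤ K := by
    intro s hs hss
    have h1 := wL_le n R κ hκ c hc hceq s s₀ hs hss (E ∩ Ω) (Eᶜ ∩ Ω)
    have h2 := wL_le n R κ hκ c hc hceq s s₀ hs hss (E ∩ Ω) (Eᶜ ∩ Ωᶜ)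
    have h3 := wL_le n R κ hκ c hc hceq s s₀ hs hss (E ∩ Ωᶜ) (Eᶜ ∩ Ω)
    have h3eq : (3:ℝ≥0∞) = 1 + 1 + 1 := by norm_num
    calc wPer n R κ c s E Ω
        ≤ (wL n R κ c s₀ (E ∩ Ω) (Eᶜ ∩ Ω) + 1) + (wL n R κ c s₀ (E ∩ Ω) (Eᶜ ∩ Ωᶜ) + 1)
            + (wL n R κ c s₀ (E ∩ Ωᶜ) (Eᶜ ∩ Ω) + 1) := by
          exact add_le_add (add_le_add h1 h2) h3
      _ = K := by rw [hK, wPer, h3eq]; ring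
  have hlim : Tendsto (fun s : ℝ => ENNReal.ofReal s * K) (𝓝[>] (0:ℝ)) (𝓝 0) := by
    have : Tendsto (fun s : ℝ => ENNReal.ofReal s) (𝓝[>] (0:ℝ)) (𝓝 0) := by
      have h := ((ENNReal.continuous_ofReal.tendsto 0).mono_left
        (nhdsWithin_le_nhds (s := Set.Ioi (0:ℝ))))
      simpa using h
    simpa using ENNReal.Tendsto.mul_const this (Or.inr hKne)
  refine tendsto_of_tendsto_of_tendsto_of_le_of_le' tendsto_const_nhds hlim
    (Eventually.of_forall fun s => zero_le) ?_
  filter_upwards [Ioc_mem_nhdsGT_of_mem ⟨le_refl (0:ℝ), hs0⟩] with s hs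
  exact mul_le_mul_right (hbound s hs.1 hs.2) _
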